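/- Let f be Lebesgue integrable over [c,d], set F(x) = ∫_c^x f(t) dt, and let u : [a,b] → [c,d] be differentiable almost everywhere on [a,b]. Then F ∘ u is absolutely continuous on [a,b] if and only if (f ∘ u) · u' is Lebesgue integrable over [a,b] and for all α, β ∈ [a,b], ∫_{u(α)}^{u(β)} f(x) dx = ∫_α^β f(u(t)) u'(t) dt. -/

import Mathlib

open MeasureTheory Set intervalIntegral
open scoped NNReal ENNReal Topology

/-- `f` is absolutely continuous on `[a,b]` (standard ε–δ definition). -/
def AbsolutelyContinuousOn (f : ℝ → ℝ) (a b : ℝ) : Prop :=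
  ∀ ε > (0:ℝ), ∃ δ > (0:ℝ), ∀ n : ℕ, ∀ x y : Fin n → ℝ,
    (∀ i, a ≤ x i ∧ x i ≤ y i ∧ y i ≤ b) →
    (∀ i j, i ≠ j → Disjoint (Ioo (x i) (y i)) (Ioo (x j) (y j))) →
    ∑ i, (y i - x i) < δ → ∑ i, |f (y i) - f (x i)| < ε

lemma null_cover {S : Set ℝ} (hS : volume S = 0) {δ : ℝ} (hδ : 0 < δ) :
    ∃ p q : ℕ → ℝ, (∀ k, p k ≤ q k) ∧ (S ⊆ ⋃ k, Ioo (p k) (q k)) ∧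
      (∀ i j, i ≠ j → Disjoint (Ioo (p i) (q i)) (Ioo (p j) (q j))) ∧
      (∀ t : Finset ℕ, ∑ k ∈ t, (q k - p k) < δ) := by
  classical
  obtain ⟨U, hSU, hUo, hUv⟩ :=
    Set.exists_isOpen_lt_of_lt S (ENNReal.ofReal δ)
      (by rw [hS]; exact ENNReal.ofReal_pos.2 hδ)
  set P : Set (ℝ × ℝ) := {z | z.1 < z.2 ∧ Ioo z.1 z.2 ⊆ U ∧ z.1 ∉ U ∧ z.2 ∉ U} with hP
  have key1 : ∀ z ∈ P, ∀ w ∈ P, z ≠ w → Disjoint (Ioo z.1 z.2) (Ioo w.1 w.2) := by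
    have h1 : ∀ z ∈ P, ∀ w ∈ P, ∀ t, t ∈ Ioo z.1 z.2 → t ∈ Ioo w.1 w.2 → w.1 ≤ z.1 := by
      intro z hz w hw t htz htw
      have : w.1 ∉ Ioo z.1 z.2 := fun h => hw.2.2.1 (hz.2.1 h)
      rcases not_and_or.1 this with h | h
      · exact not_lt.1 h
      · exact absurd (htw.1.trans htz.2) h
    have h2 : ∀ z ∈ P, ∀ w ∈ P, ∀ t, t ∈ Ioo z.1 z.2 → t ∈ Ioo w.1 w.2 → z.2 ≤ w.2 := by
      intro z hz w hw t htz htw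
      have : w.2 ∉ Ioo z.1 z.2 := fun h => hw.2.2.2 (hz.2.1 h)
      rcases not_and_or.1 this with h | h
      · exact absurd (htz.1.trans htw.2) h
      · exact not_lt.1 h
    intro z hz w hw hne
    rw [Set.disjoint_left]
    intro t htz htw
    apply hne
    exact Prod.ext (le_antisymm (h1 w hw z hz t htw htz) (h1 z hz w hw t htz htw))
      (le_antisymm (h2 z hz w hw t htz htw) (h2 w hw z hz t htw htz))
  have key2 : ∀ s ∈ U, ∃ z ∈ P, s ∈ Ioo z.1 z.2 := by
    intro s hs
    set T : Set ℝ := {y | uIcc s y ⊆ U} with hT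
    have hsT : s ∈ T := by
      simp only [hT, mem_setOf_eq, uIcc_self, singleton_subset_iff]; exact hs
    have hTU : T ⊆ U := fun y hy => hy right_mem_uIcc
    have hUfin : volume U < ⊤ := hUv.trans ENNReal.ofReal_lt_top
    have hbdd : BddAbove T := by
      by_contra hbd
      rw [not_bddAbove_iff] at hbd
      have : Ici s ⊆ U := by
        intro t ht
        obtain ⟨y, hyT, hty⟩ := hbd t
        exact hyT (by rw [mem_uIcc]; left; exact ⟨ht, hty.le⟩)
      exact absurd (lt_of_le_of_lt (measure_mono this) hUfin) (by simp)
    have hbdd' : BddBelow T := by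
      by_contra hbd
      rw [not_bddBelow_iff] at hbd
      have : Iic s ⊆ U := by
        intro t ht
        obtain ⟨y, hyT, hty⟩ := hbd t
        exact hyT (by rw [mem_uIcc]; right; exact ⟨hty.le, ht⟩)
      exact absurd (lt_of_le_of_lt (measure_mono this) hUfin) (by simp)
    set p := sInf T with hp
    set q := sSup T with hq
    have hooT : Ioo p q ⊆ T := by
      intro t ht
      obtain ⟨y, hyT, hty⟩ := exists_lt_of_lt_csSup ⟨s, hsT⟩ ht.2
      obtain ⟨y', hy'T, hty'⟩ := exists_lt_of_csInf_lt ⟨s, hsT⟩ ht.1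
      rcases le_total s t with hst | hst
      · intro w hw
        apply hyT
        rw [uIcc_of_le hst] at hw
        rw [uIcc_of_le (hst.trans hty.le)]
        exact ⟨hw.1, hw.2.trans hty.le⟩
      · intro w hw
        apply hy'T
        rw [uIcc_of_ge hst] at hw
        rw [uIcc_of_ge (hty'.le.trans hst)]
        exact ⟨hty'.le.trans hw.1, hw.2⟩
    obtain ⟨ε, hε, hball⟩ := Metric.isOpen_iff.1 hUo s hs
    have hIccball : ∀ w ∈ Icc (s - ε/2) (s + ε/2), w ∈ U := by
      intro w hw
      apply hball
      rw [Metric.mem_ball, Real.dist_eq, abs_lt]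
      constructor <;> [linarith [hw.1]; linarith [hw.2]]
    have hsplusT : s + ε/2 ∈ T := by
      intro w hw
      rw [uIcc_of_le (by linarith)] at hw
      exact hIccball w ⟨by linarith [hw.1], hw.2⟩
    have hsminusT : s - ε/2 ∈ T := by
      intro w hw
      rw [uIcc_of_ge (by linarith)] at hw
      exact hIccball w ⟨hw.1, by linarith [hw.2]⟩
    have hps : p < s := lt_of_le_of_lt (csInf_le hbdd' hsminusT) (by linarith)
    have hsq : s < q := lt_of_lt_of_le (by linarith) (le_csSup hbdd hsplusT)
    have hpU : p ∉ U := by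
      intro hpmem
      obtain ⟨ε', hε', hball'⟩ := Metric.isOpen_iff.1 hUo p hpmem
      have hpt : p < min (p + ε'/2) ((p + s)/2) := by
        apply lt_min <;> linarith
      have htq : min (p + ε'/2) ((p + s)/2) < q := by
        calc min (p + ε'/2) ((p + s)/2) ≤ (p+s)/2 := min_le_right _ _
        _ < s := by linarith
        _ < q := hsq
      have htT : min (p + ε'/2) ((p + s)/2) ∈ T := hooT ⟨hpt, htq⟩
      have hnew : p - ε'/2 ∈ T := by
        intro w hw
        rw [uIcc_of_ge (by linarith)] at hw
        rcases le_total (min (p + ε'/2) ((p + s)/2)) w with htw | htw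
        · apply htT
          rw [mem_uIcc]; right
          exact ⟨htw, hw.2⟩
        · apply hball'
          rw [Metric.mem_ball, Real.dist_eq, abs_lt]
          have h3 := min_le_left (p + ε'/2) ((p + s)/2)
          constructor <;> [linarith [hw.1]; linarith [htw, h3]]
      have := csInf_le hbdd' hnew
      rw [← hp] at this
      linarith
    have hqU : q ∉ U := by
      intro hqmem
      obtain ⟨ε', hε', hball'⟩ := Metric.isOpen_iff.1 hUo q hqmem
      have hqt : max (q - ε'/2) ((q + s)/2) < q := by
        apply max_lt <;> linarith
      have hpt : p < max (q - ε'/2) ((q + s)/2) := by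
        calc p < s := hps
        _ ≤ (q+s)/2 := by linarith
        _ ≤ max (q - ε'/2) ((q + s)/2) := le_max_right _ _
      have htT : max (q - ε'/2) ((q + s)/2) ∈ T := hooT ⟨hpt, hqt⟩
      have hnew : q + ε'/2 ∈ T := by
        intro w hw
        rw [uIcc_of_le (by linarith)] at hw
        rcases le_total w (max (q - ε'/2) ((q + s)/2)) with htw | htw
        · apply htT
          rw [mem_uIcc]; left
          exact ⟨hw.1, htw⟩
        · apply hball'
          rw [Metric.mem_ball, Real.dist_eq, abs_lt]
          have h3 := le_max_left (q - ε'/2) ((q + s)/2)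
          constructor <;> [linarith [htw, h3]; linarith [hw.2]]
      have := le_csSup hbdd hnew
      rw [← hq] at this
      linarith
    exact ⟨(p, q), ⟨hps.trans hsq, fun w hw => hTU (hooT hw), hpU, hqU⟩, hps, hsq⟩
  have hPc : P.Countable := by
    have hch : ∀ z : P, ∃ ρ : ℚ, (ρ : ℝ) ∈ Ioo (z : ℝ × ℝ).1 (z : ℝ × ℝ).2 := by
      rintro ⟨z, hz⟩
      obtain ⟨ρ, h1, h2⟩ := exists_rat_btwn hz.1
      exact ⟨ρ, h1, h2⟩
    choose ρ hρ using hch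
    have hinj : Function.Injective ρ := by
      intro z w hzw
      by_contra hne
      have hne' : (z : ℝ × ℝ) ≠ (w : ℝ × ℝ) := fun h => hne (Subtype.ext h)
      exact (Set.disjoint_left.1 (key1 _ z.2 _ w.2 hne') (hρ z)) (hzw ▸ hρ w)
    exact Set.countable_coe_iff.1 hinj.countable
  obtain ⟨e, he⟩ := (hPc.insert ((0:ℝ), (0:ℝ))).exists_eq_range (insert_nonempty _ _)
  obtain ⟨z, hz1, hz2⟩ : ∃ z : ℕ → ℝ × ℝ,
      (∀ k, (∃ j, j < k ∧ e j = e k) → z k = ((0:ℝ), (0:ℝ))) ∧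
      (∀ k, ¬(∃ j, j < k ∧ e j = e k) → z k = e k) :=
    ⟨fun k => if h : ∃ j, j < k ∧ e j = e k then ((0:ℝ), (0:ℝ)) else e k,
     fun k h => dif_pos h, fun k h => dif_neg h⟩
  have h00 : ((0:ℝ), (0:ℝ)) ∉ P := fun h => lt_irrefl (0:ℝ) h.1
  have hzP' : ∀ k, z k = ((0:ℝ), (0:ℝ)) ∨ z k ∈ P := by
    intro k
    by_cases h : ∃ j, j < k ∧ e j = e k
    · exact Or.inl (hz1 k h)
    · rw [hz2 k h]
      have : e k ∈ insert ((0:ℝ), (0:ℝ)) P := by rw [he]; exact mem_range_self _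
      rcases mem_insert_iff.1 this with h' | h'
      · exact Or.inl h'
      · exact Or.inr h'
  have hzne : ∀ i j, i ≠ j → z i ∈ P → z j ∈ P → z i ≠ z j := by
    have aux : ∀ i j, i < j → z i ∈ P → z j ∈ P → z i ≠ z j := by
      intro i j hij hi hj heq
      have hzi : z i = e i := by
        by_cases h : ∃ j', j' < i ∧ e j' = e i
        · exact absurd (hz1 i h ▸ hi) h00
        · exact hz2 i h
      have hzj : z j = e j := by
        by_cases h : ∃ j', j' < j ∧ e j' = e j
        · exact absurd (hz1 j h ▸ hj) h00
        · exact hz2 j h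
      have : z j = ((0:ℝ), (0:ℝ)) := hz1 j ⟨i, hij, by rw [← hzi, ← hzj, heq]⟩
      exact h00 (this ▸ hj)
    intro i j hij hi hj
    rcases Nat.lt_or_ge i j with h | h
    · exact aux i j h hi hj
    · rcases Nat.lt_or_ge j i with h' | h'
      · exact fun hh => aux j i h' hj hi hh.symm
      · exact absurd (le_antisymm h' h) hij
  have hfdisj : ∀ i j, i ≠ j → Disjoint (Ioo (z i).1 (z i).2) (Ioo (z j).1 (z j).2) := by
    intro i j hij
    rcases hzP' i with hi | hi
    · rw [hi]; simp
    rcases hzP' j with hj | hj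
    · rw [hj]; simp
    exact key1 _ hi _ hj (hzne i j hij hi hj)
  refine ⟨fun k => (z k).1, fun k => (z k).2, ?_, ?_, ?_, ?_⟩
  · intro k
    show (z k).1 ≤ (z k).2
    rcases hzP' k with h | h
    · rw [h]
    · exact h.1.le
  · intro s hsS
    obtain ⟨w, hwP, hsw⟩ := key2 s (hSU hsS)
    have hmem : w ∈ insert ((0:ℝ), (0:ℝ)) P := mem_insert_of_mem _ hwP
    rw [he] at hmem
    obtain ⟨k₀, hk₀⟩ := hmem
    have hex : ∃ k, e k = w := ⟨k₀, hk₀⟩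
    have hek : e (Nat.find hex) = w := Nat.find_spec hex
    have hzk : z (Nat.find hex) = w := by
      by_cases h : ∃ j, j < Nat.find hex ∧ e j = e (Nat.find hex)
      · obtain ⟨j, hj, hje⟩ := h
        exact absurd (hje.trans hek) (Nat.find_min hex hj)
      · rw [hz2 _ h, hek]
    refine mem_iUnion.2 ⟨Nat.find hex, ?_⟩
    show s ∈ Ioo (z (Nat.find hex)).1 (z (Nat.find hex)).2
    rw [hzk]; exact hsw
  · exact hfdisj
  · intro t
    have hdisj : (t : Set ℕ).PairwiseDisjoint (fun k => Ioo (z k).1 (z k).2) :=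
      fun i _ j _ hij => hfdisj i j hij
    have hm : ∀ k ∈ t, MeasurableSet (Ioo (z k).1 (z k).2) := fun k _ => measurableSet_Ioo
    have hUsub : (⋃ k ∈ t, Ioo (z k).1 (z k).2) ⊆ U := by
      intro w hw
      rw [mem_iUnion₂] at hw
      obtain ⟨k, _, hk⟩ := hw
      rcases hzP' k with h | h
      · rw [h] at hk; simp at hk
      · exact h.2.1 hk
    have hle : ∑ k ∈ t, ENNReal.ofReal ((z k).2 - (z k).1) < ENNReal.ofReal δ := by
      calc ∑ k ∈ t, ENNReal.ofReal ((z k).2 - (z k).1)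
          = ∑ k ∈ t, volume (Ioo (z k).1 (z k).2) := by
            refine Finset.sum_congr rfl fun k _ => ?_
            rw [Real.volume_Ioo]
        _ = volume (⋃ k ∈ t, Ioo (z k).1 (z k).2) := (measure_biUnion_finset hdisj hm).symm
        _ ≤ volume U := measure_mono hUsub
        _ < ENNReal.ofReal δ := hUv
    have hnn : ∀ k ∈ t, 0 ≤ (z k).2 - (z k).1 := by
      intro k _
      rcases hzP' k with h | h
      · rw [h]; simp
      · linarith [h.1]
    rw [← ENNReal.ofReal_sum_of_nonneg hnn] at hle
    exact (ENNReal.ofReal_lt_ofReal_iff hδ).1 hle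

lemma null_of_expand_null {v : ℝ → ℝ} {A : Set ℝ} {c : ℝ} (hc : 0 < c)
    (h : ∀ x ∈ A, ∀ y ∈ A, c * |y - x| ≤ |v y - v x|) (hA : volume (v '' A) = 0) :
    volume A = 0 := by
  have key : ∀ δ : ℝ, 0 < δ → volume A ≤ ENNReal.ofReal (2 * δ / c) := by
    intro δ hδ
    obtain ⟨p, q, hpq, hcov, hdisj, hsum⟩ := null_cover hA hδ
    have hsub : A ⊆ ⋃ k, A ∩ v ⁻¹' (Ioo (p k) (q k)) := by
      intro x hx
      obtain ⟨k, hk⟩ := mem_iUnion.1 (hcov (mem_image_of_mem v hx))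
      exact mem_iUnion.2 ⟨k, hx, hk⟩
    have hBk : ∀ k, volume (A ∩ v ⁻¹' (Ioo (p k) (q k))) ≤
        ENNReal.ofReal (2 * (q k - p k) / c) := by
      intro k
      rcases (A ∩ v ⁻¹' (Ioo (p k) (q k))).eq_empty_or_nonempty with he | ⟨x₀, hx₀⟩
      · rw [he, measure_empty]; exact zero_le
      have hsubI : A ∩ v ⁻¹' (Ioo (p k) (q k)) ⊆
          Icc (x₀ - (q k - p k)/c) (x₀ + (q k - p k)/c) := by
        intro y hy
        have h1 : c * |y - x₀| ≤ |v y - v x₀| := h x₀ hx₀.1 y hy.1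
        have hy' := hy.2
        have hx' := hx₀.2
        rw [mem_preimage, mem_Ioo] at hy' hx'
        have h2 : |v y - v x₀| ≤ q k - p k := by
          rw [abs_le]; constructor <;> linarith [hy'.1, hy'.2, hx'.1, hx'.2]
        have h3 : |y - x₀| ≤ (q k - p k)/c := by
          rw [le_div_iff₀ hc]; nlinarith [abs_nonneg (y - x₀)]
        rw [abs_le] at h3
        constructor <;> linarith [h3.1, h3.2]
      calc volume (A ∩ v ⁻¹' (Ioo (p k) (q k)))
          ≤ volume (Icc (x₀ - (q k - p k)/c) (x₀ + (q k - p k)/c)) := measure_mono hsubI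
        _ = ENNReal.ofReal (2 * (q k - p k) / c) := by rw [Real.volume_Icc]; ring_nf
    calc volume A ≤ ∑' k, volume (A ∩ v ⁻¹' (Ioo (p k) (q k))) :=
          (measure_mono hsub).trans (measure_iUnion_le _)
      _ ≤ ∑' k, ENNReal.ofReal (2 * (q k - p k) / c) := ENNReal.tsum_le_tsum hBk
      _ ≤ ENNReal.ofReal (2 * δ / c) := by
          rw [ENNReal.tsum_eq_iSup_sum]
          refine iSup_le fun t => ?_
          rw [← ENNReal.ofReal_sum_of_nonneg
            (fun k _ => div_nonneg (by linarith [hpq k]) hc.le)]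
          apply ENNReal.ofReal_le_ofReal
          calc ∑ k ∈ t, 2 * (q k - p k) / c = (2/c) * ∑ k ∈ t, (q k - p k) := by
                rw [Finset.mul_sum]; exact Finset.sum_congr rfl fun k _ => by ring
            _ ≤ (2/c) * δ := mul_le_mul_of_nonneg_left (hsum t).le (by positivity)
            _ = 2 * δ / c := by ring
  refine le_antisymm ?_ zero_le
  refine ENNReal.le_of_forall_pos_le_add fun ε hε _ => ?_
  rw [zero_add]
  have hεpos : (0:ℝ) < (ε:ℝ) := hε
  have h2 : volume A ≤ ENNReal.ofReal (2 * (c * ε / 2) / c) := key _ (by positivity)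
  have h3 : 2 * (c * (ε:ℝ) / 2) / c = (ε:ℝ) := by field_simp
  rw [h3] at h2
  rw [← ENNReal.ofReal_coe_nnreal]
  exact h2

lemma deriv_zero_of_image_null {v v' : ℝ → ℝ} {s : Set ℝ}
    (hd : ∀ t ∈ s, HasDerivWithinAt v (v' t) s t) (him : volume (v '' s) = 0) :
    volume {t ∈ s | v' t ≠ 0} = 0 := by
  have main : ∀ n : ℕ, volume {t ∈ s | 1/(n+1 : ℝ) < |v' t|} = 0 := by
    intro n
    set c : ℝ := 1/(n+1 : ℝ) with hcdef
    have hcpos : 0 < c := by positivity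
    set A : ℕ → Set ℝ := fun m =>
      {t | t ∈ s ∧ c < |v' t| ∧
        ∀ t' ∈ s, |t' - t| ≤ 1/(m+1 : ℝ) → (c/2) * |t' - t| ≤ |v t' - v t|} with hA
    have hAs : ∀ m, A m ⊆ s := fun m t ht => ht.1
    have hcover : {t ∈ s | c < |v' t|} ⊆ ⋃ m, A m := by
      intro t ht
      have hder := hasDerivWithinAt_iff_isLittleO.1 (hd t ht.1)
      have hev := hder.def (half_pos hcpos)
      rw [eventually_nhdsWithin_iff, Metric.eventually_nhds_iff] at hev
      obtain ⟨r, hr, hball⟩ := hev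
      obtain ⟨m, hm⟩ := exists_nat_one_div_lt hr
      refine mem_iUnion.2 ⟨m, ht.1, ht.2, fun t' ht' hdist => ?_⟩
      have hd' : dist t' t < r := by
        rw [Real.dist_eq]; exact lt_of_le_of_lt hdist hm
      have hb := hball hd' ht'
      rw [Real.norm_eq_abs, Real.norm_eq_abs, smul_eq_mul] at hb
      have htri : |(t' - t) * v' t| ≤ |v t' - v t| + |v t' - v t - (t' - t) * v' t| := by
        have h0 := abs_sub (v t' - v t) (v t' - v t - (t' - t) * v' t)
        have heq : v t' - v t - (v t' - v t - (t' - t) * v' t) = (t' - t) * v' t := by ring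
        rwa [heq] at h0
      have habs : |(t' - t) * v' t| = |t' - t| * |v' t| := abs_mul _ _
      have hmul : |t' - t| * c ≤ |t' - t| * |v' t| :=
        mul_le_mul_of_nonneg_left ht.2.le (abs_nonneg _)
      linarith [hb, htri, habs, hmul]
    have hAm : ∀ m, volume (A m) = 0 := by
      intro m
      have hh : (0:ℝ) < 1/(m+1 : ℝ) := by positivity
      have hsplit : A m ⊆ ⋃ j : ℤ,
          (A m ∩ Icc ((j : ℝ) * (1/(m+1:ℝ))) ((j+1 : ℝ) * (1/(m+1:ℝ)))) := by
        intro t ht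
        refine mem_iUnion.2 ⟨⌊t / (1/(m+1:ℝ))⌋, ht, ?_, ?_⟩
        · rw [← le_div_iff₀ hh]
          exact Int.floor_le _
        · rw [← div_le_iff₀ hh]
          push_cast
          exact (Int.lt_floor_add_one _).le
      refine measure_mono_null hsplit (measure_iUnion_null fun j => ?_)
      refine null_of_expand_null (half_pos hcpos) ?_
        (measure_mono_null (image_mono (inter_subset_left.trans (hAs m))) him)
      intro x hx y hy
      have hxy : |y - x| ≤ 1/(m+1:ℝ) := by
        rw [abs_le]
        have h1 := hx.2.1
        have h2 := hx.2.2
        have h3 := hy.2.1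
        have h4 := hy.2.2
        constructor <;> nlinarith
      exact hx.1.2.2 y (hy.1.1) hxy
    exact measure_mono_null hcover (measure_iUnion_null hAm)
  have hsub : {t ∈ s | v' t ≠ 0} ⊆ ⋃ n : ℕ, {t ∈ s | 1/(n+1:ℝ) < |v' t|} := by
    intro t ht
    obtain ⟨n, hn⟩ := exists_nat_one_div_lt (abs_pos.2 ht.2)
    exact mem_iUnion.2 ⟨n, ht.1, hn⟩
  exact measure_mono_null hsub (measure_iUnion_null main)

lemma AbsolutelyContinuousOn.sub {f g : ℝ → ℝ} {a b : ℝ}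
    (hf : AbsolutelyContinuousOn f a b) (hg : AbsolutelyContinuousOn g a b) :
    AbsolutelyContinuousOn (f - g) a b := by
  intro ε hε
  obtain ⟨δ1, hδ1, h1⟩ := hf (ε/2) (half_pos hε)
  obtain ⟨δ2, hδ2, h2⟩ := hg (ε/2) (half_pos hε)
  refine ⟨min δ1 δ2, lt_min hδ1 hδ2, fun n x y hxy hdisj hsum => ?_⟩
  have s1 := h1 n x y hxy hdisj (hsum.trans_le (min_le_left _ _))
  have s2 := h2 n x y hxy hdisj (hsum.trans_le (min_le_right _ _))
  calc ∑ i, |(f - g) (y i) - (f - g) (x i)|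
      ≤ ∑ i, (|f (y i) - f (x i)| + |g (y i) - g (x i)|) := by
        refine Finset.sum_le_sum fun i _ => ?_
        simp only [Pi.sub_apply]
        have heq : f (y i) - g (y i) - (f (x i) - g (x i)) =
            (f (y i) - f (x i)) - (g (y i) - g (x i)) := by ring
        rw [heq]
        exact abs_sub _ _
    _ = (∑ i, |f (y i) - f (x i)|) + ∑ i, |g (y i) - g (x i)| := Finset.sum_add_distrib
    _ < ε/2 + ε/2 := add_lt_add s1 s2
    _ = ε := add_halves ε

lemma AbsolutelyContinuousOn.single {f : ℝ → ℝ} {a b δ ε : ℝ}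
    (hb : ∀ n : ℕ, ∀ x y : Fin n → ℝ,
      (∀ i, a ≤ x i ∧ x i ≤ y i ∧ y i ≤ b) →
      (∀ i j, i ≠ j → Disjoint (Ioo (x i) (y i)) (Ioo (x j) (y j))) →
      ∑ i, (y i - x i) < δ → ∑ i, |f (y i) - f (x i)| < ε)
    {x y : ℝ} (hx : x ∈ Icc a b) (hy : y ∈ Icc a b) (hxy : x ≤ y) (hlen : y - x < δ) :
    |f y - f x| < ε := by
  have := hb 1 (fun _ => x) (fun _ => y) (fun _ => ⟨hx.1, hxy, hy.2⟩)
    (fun i j hij => absurd (Subsingleton.elim i j) hij)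
    (by rw [Fin.sum_univ_one]; exact hlen)
  rwa [Fin.sum_univ_one] at this

lemma AbsolutelyContinuousOn.continuousOn {f : ℝ → ℝ} {a b : ℝ}
    (hf : AbsolutelyContinuousOn f a b) : ContinuousOn f (Icc a b) := by
  intro t ht
  rw [Metric.continuousWithinAt_iff]
  intro ε hε
  obtain ⟨δ, hδ, hb⟩ := hf ε hε
  refine ⟨δ, hδ, fun {t'} ht' hd => ?_⟩
  rw [Real.dist_eq] at hd ⊢
  rcases le_total t t' with h | h
  · exact AbsolutelyContinuousOn.single hb ht ht' h
      (by rw [abs_of_nonneg (by linarith)] at hd; linarith)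
  · have := AbsolutelyContinuousOn.single hb ht' ht h
      (by rw [abs_of_nonpos (by linarith)] at hd; linarith)
    rwa [abs_sub_comm]

lemma AbsolutelyContinuousOn.image_null {f : ℝ → ℝ} {a b : ℝ}
    (hf : AbsolutelyContinuousOn f a b) {N : Set ℝ} (hN : N ⊆ Icc a b)
    (hN0 : volume N = 0) : volume (f '' N) = 0 := by
  classical
  refine le_antisymm ?_ zero_le
  refine ENNReal.le_of_forall_pos_le_add fun ε0 hε0 _ => ?_
  rw [zero_add, ← ENNReal.ofReal_coe_nnreal]
  set ε : ℝ := (ε0 : ℝ) with hεdef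
  have hε : 0 < ε := hε0
  obtain ⟨δ, hδ, hb⟩ := hf ε hε
  obtain ⟨p, q, hpq, hcov, hdisj, hsum⟩ := null_cover hN0 hδ
  set piece : ℕ → Set ℝ := fun k => f '' (Ioo (p k) (q k) ∩ Icc a b) with hpiece
  set D : ℕ → ℝ≥0∞ := fun k => Metric.ediam (piece k) with hD
  have hqpδ : ∀ k, q k - p k < δ := by
    intro k
    have := hsum {k}
    simpa using this
  have hDle : ∀ k, D k ≤ ENNReal.ofReal ε := by
    intro k
    refine EMetric.diam_le ?_
    rintro _ ⟨w1, hw1, rfl⟩ _ ⟨w2, hw2, rfl⟩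
    rw [edist_dist, Real.dist_eq]
    apply ENNReal.ofReal_le_ofReal
    rcases le_total w1 w2 with h | h
    · rw [abs_sub_comm]
      exact (AbsolutelyContinuousOn.single hb hw1.2 hw2.2 h
        (by have := hw1.1; have := hw2.1; have := hqpδ k
            rcases hw1.1 with ⟨h1, h2⟩; rcases hw2.1 with ⟨h3, h4⟩; linarith)).le
    · exact (AbsolutelyContinuousOn.single hb hw2.2 hw1.2 h
        (by rcases hw1.1 with ⟨h1, h2⟩; rcases hw2.1 with ⟨h3, h4⟩
            have := hqpδ k; linarith)).le
  have claim : ∀ t : Finset ℕ, ∑ k ∈ t, D k ≤ ENNReal.ofReal ε := by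
    intro t
    refine ENNReal.le_of_forall_pos_le_add fun η hη htop => ?_
    set m : ℝ := (t.card : ℝ) + 1 with hm
    have hmpos : 0 < m := by positivity
    have hη' : (0:ℝ) < (η:ℝ)/m := by positivity
    -- in each nonempty piece choose a pair nearly achieving the diameter
    have hchoice : ∀ k ∈ t, ∃ x' y' : ℝ,
        (piece k).Nonempty → (x' ∈ Ioo (p k) (q k) ∩ Icc a b ∧
          y' ∈ Ioo (p k) (q k) ∩ Icc a b ∧ x' ≤ y' ∧
          D k ≤ ENNReal.ofReal (|f y' - f x'|) + ENNReal.ofReal ((η:ℝ)/m)) := by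
      intro k _
      by_cases hne : (piece k).Nonempty
      · obtain ⟨_, ⟨w0, hw0, rfl⟩⟩ := hne
        by_cases hsmall : D k ≤ ENNReal.ofReal ((η:ℝ)/m)
        · exact ⟨w0, w0, fun _ => ⟨hw0, hw0, le_refl _,
            by rw [sub_self, abs_zero, ENNReal.ofReal_zero, zero_add]; exact hsmall⟩⟩
        · push_neg at hsmall
          have hDne : D k ≠ ⊤ := ((hDle k).trans_lt ENNReal.ofReal_lt_top).ne
          have hDpos : D k ≠ 0 := by
            intro h0; rw [h0] at hsmall; exact (not_lt.2 zero_le) hsmall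
          have hlt : D k - ENNReal.ofReal ((η:ℝ)/m) < D k :=
            ENNReal.sub_lt_self hDne hDpos (ENNReal.ofReal_pos.2 hη').ne'
          have : ¬ (D k ≤ D k - ENNReal.ofReal ((η:ℝ)/m)) := not_le.2 hlt
          rw [hD] at this
          simp only [EMetric.diam_le_iff, not_forall] at this
          obtain ⟨z1, hz1, z2, hz2, hgt⟩ := this
          push_neg at hgt
          obtain ⟨w1, hw1, rfl⟩ := hz1
          obtain ⟨w2, hw2, rfl⟩ := hz2
          have hDbound : D k ≤ edist (f w1) (f w2) + ENNReal.ofReal ((η:ℝ)/m) :=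
            tsub_le_iff_right.1 hgt.le
          rcases le_total w1 w2 with h | h
          · refine ⟨w1, w2, fun _ => ⟨hw1, hw2, h, ?_⟩⟩
            rwa [edist_dist, Real.dist_eq, abs_sub_comm] at hDbound
          · refine ⟨w2, w1, fun _ => ⟨hw2, hw1, h, ?_⟩⟩
            rwa [edist_dist, Real.dist_eq] at hDbound
      · exact ⟨0, 0, fun h => absurd h hne⟩
    choose! xs ys hxys using hchoice
    set t' : Finset ℕ := t.filter (fun k => (piece k).Nonempty) with ht'
    have hsum_eq : ∑ k ∈ t, D k = ∑ k ∈ t', D k := by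
      rw [ht']
      rw [Finset.sum_filter]
      refine Finset.sum_congr rfl fun k hk => ?_
      split
      · rfl
      · next hne =>
          rw [hD]
          simp only [piece, not_nonempty_iff_eq_empty] at hne ⊢
          rw [hne, EMetric.diam_empty]
    have hprop : ∀ k ∈ t', xs k ∈ Ioo (p k) (q k) ∩ Icc a b ∧
        ys k ∈ Ioo (p k) (q k) ∩ Icc a b ∧ xs k ≤ ys k ∧
        D k ≤ ENNReal.ofReal (|f (ys k) - f (xs k)|) + ENNReal.ofReal ((η:ℝ)/m) := by
      intro k hk
      rw [ht', Finset.mem_filter] at hk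
      exact hxys k hk.1 hk.2
    -- apply AC to the family indexed by Fin t'.card
    set n := t'.card with hn
    set e := t'.orderIsoOfFin rfl with he
    have hACsum : ∑ k ∈ t', |f (ys k) - f (xs k)| < ε := by
      have happ := hb n (fun i => xs (e i)) (fun i => ys (e i))
        (fun i => by
          obtain ⟨hx, hy, hle, _⟩ := hprop (e i) (e i).2
          exact ⟨hx.2.1, hle, hy.2.2⟩)
        (fun i j hij => by
          have hne : ((e i : ℕ)) ≠ ((e j : ℕ)) := by
            intro hcontra
            exact hij (e.injective (Subtype.ext hcontra))
          obtain ⟨hxi, hyi, _, _⟩ := hprop (e i) (e i).2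
          obtain ⟨hxj, hyj, _, _⟩ := hprop (e j) (e j).2
          refine Disjoint.mono ?_ ?_ (hdisj _ _ hne)
          · exact Ioo_subset_Ioo hxi.1.1.le hyi.1.2.le
          · exact Ioo_subset_Ioo hxj.1.1.le hyj.1.2.le)
        (by
          have hsum1 : ∑ i : Fin n, (ys (e i) - xs (e i)) = ∑ k ∈ t', (ys k - xs k) := by
            rw [← Finset.sum_coe_sort t' (fun k => ys k - xs k)]
            exact Fintype.sum_equiv e.toEquiv _ _ (fun i => rfl)
          rw [hsum1]
          have : ∑ k ∈ t', (ys k - xs k) ≤ ∑ k ∈ t', (q k - p k) := by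
            refine Finset.sum_le_sum fun k hk => ?_
            obtain ⟨hx, hy, hle, _⟩ := hprop k hk
            have := hx.1.1
            have := hy.1.2
            linarith [hx.1.1, hy.1.2]
          calc ∑ k ∈ t', (ys k - xs k) ≤ ∑ k ∈ t', (q k - p k) := this
            _ < δ := hsum t')
      have hsum2 : ∑ i : Fin n, |f (ys (e i)) - f (xs (e i))| =
          ∑ k ∈ t', |f (ys k) - f (xs k)| := by
        rw [← Finset.sum_coe_sort t' (fun k => |f (ys k) - f (xs k)|)]
        exact Fintype.sum_equiv e.toEquiv _ _ (fun i => rfl)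
      rwa [hsum2] at happ
    calc ∑ k ∈ t, D k = ∑ k ∈ t', D k := hsum_eq
      _ ≤ ∑ k ∈ t', (ENNReal.ofReal (|f (ys k) - f (xs k)|) + ENNReal.ofReal ((η:ℝ)/m)) :=
          Finset.sum_le_sum fun k hk => (hprop k hk).2.2.2
      _ = (∑ k ∈ t', ENNReal.ofReal (|f (ys k) - f (xs k)|)) +
          (t'.card : ℝ≥0∞) * ENNReal.ofReal ((η:ℝ)/m) := by
          rw [Finset.sum_add_distrib, Finset.sum_const, nsmul_eq_mul]
      _ ≤ ENNReal.ofReal ε + (η : ℝ≥0∞) := by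
          refine add_le_add ?_ ?_
          · rw [← ENNReal.ofReal_sum_of_nonneg (fun k _ => abs_nonneg _)]
            exact ENNReal.ofReal_le_ofReal hACsum.le
          · have hcard : (t'.card : ℝ≥0∞) * ENNReal.ofReal ((η:ℝ)/m) =
                ENNReal.ofReal ((t'.card : ℝ) * ((η:ℝ)/m)) := by
              rw [ENNReal.ofReal_mul (by positivity)]
              congr 1
              rw [ENNReal.ofReal_natCast]
            rw [hcard, ← ENNReal.ofReal_coe_nnreal]
            apply ENNReal.ofReal_le_ofReal
            have hcard_le : (t'.card : ℝ) ≤ (t.card : ℝ) := by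
              exact_mod_cast Finset.card_le_card (Finset.filter_subset _ _)
            rw [div_eq_mul_inv]
            calc (t'.card : ℝ) * ((η:ℝ) * m⁻¹) ≤ m * ((η:ℝ) * m⁻¹) := by
                  apply mul_le_mul_of_nonneg_right _ (by positivity)
                  rw [hm]; linarith
              _ = (η:ℝ) := by field_simp
  have hsub : f '' N ⊆ ⋃ k, piece k := by
    intro z hz
    obtain ⟨w, hw, rfl⟩ := hz
    obtain ⟨k, hk⟩ := mem_iUnion.1 (hcov hw)
    exact mem_iUnion.2 ⟨k, mem_image_of_mem f ⟨hk, hN hw⟩⟩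
  calc volume (f '' N) ≤ ∑' k, volume (piece k) :=
        (measure_mono hsub).trans (measure_iUnion_le _)
    _ ≤ ∑' k, D k := ENNReal.tsum_le_tsum fun k => Real.volume_le_diam _
    _ ≤ ENNReal.ofReal ε := by
        rw [ENNReal.tsum_eq_iSup_sum]
        exact iSup_le claim

lemma ac_of_integral_bound {φ : ℝ → ℝ} {a b : ℝ} (hφ : IntegrableOn φ (Icc a b) volume)
    {G : ℝ → ℝ}
    (hG : ∀ x ∈ Icc a b, ∀ y ∈ Icc a b, x ≤ y → |G y - G x| ≤ ∫ t in Ioc x y, |φ t|) :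
    AbsolutelyContinuousOn G a b := by
  intro ε hε
  have hint : ∫⁻ t, ENNReal.ofReal |φ t| ∂(volume.restrict (Icc a b)) ≠ ⊤ := by
    have h2 := hφ.2
    rw [hasFiniteIntegral_iff_norm] at h2
    simpa [Real.norm_eq_abs] using h2.ne
  obtain ⟨δ', hδ', hsmall⟩ := exists_pos_setLIntegral_lt_of_measure_lt hint
    (ne_of_gt (ENNReal.ofReal_pos.2 hε))
  set δ'' := min δ' 1 with hδ''def
  have hδ''pos : 0 < δ'' := lt_min hδ' zero_lt_one
  have hδ''top : δ'' ≠ ⊤ := ((min_le_right _ _).trans_lt ENNReal.one_lt_top).ne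
  have htR : 0 < δ''.toReal := ENNReal.toReal_pos hδ''pos.ne' hδ''top
  refine ⟨δ''.toReal/2, by positivity, fun n x y hxy hdisj hsum => ?_⟩
  set μR := volume.restrict (Icc a b) with hμR
  have hIooIcc : ∀ i : Fin n, Ioo (x i) (y i) ⊆ Icc a b := fun i =>
    fun w hw => ⟨(hxy i).1.trans hw.1.le, hw.2.le.trans (hxy i).2.2⟩
  have key : ∀ i : Fin n, ENNReal.ofReal |G (y i) - G (x i)| ≤
      ∫⁻ t in Ioo (x i) (y i), ENNReal.ofReal |φ t| ∂μR := by
    intro i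
    have hxm : x i ∈ Icc a b := ⟨(hxy i).1, (hxy i).2.1.trans (hxy i).2.2⟩
    have hym : y i ∈ Icc a b := ⟨(hxy i).1.trans (hxy i).2.1, (hxy i).2.2⟩
    have hGi := hG (x i) hxm (y i) hym (hxy i).2.1
    have hIoc : Ioc (x i) (y i) ⊆ Icc a b := fun w hw =>
      ⟨(hxy i).1.trans hw.1.le, hw.2.trans (hxy i).2.2⟩
    have hIoo' : Ioo (x i) (y i) ∩ Icc a b = Ioo (x i) (y i) :=
      inter_eq_self_of_subset_left (hIooIcc i)
    have e1 : ∫ t in Ioc (x i) (y i), |φ t| = ∫ t in Ioo (x i) (y i), |φ t| :=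
      integral_Ioc_eq_integral_Ioo
    have e2 : ∫ t in Ioo (x i) (y i), |φ t| = ∫ t in Ioo (x i) (y i), |φ t| ∂μR := by
      rw [hμR, Measure.restrict_restrict measurableSet_Ioo, hIoo']
    have hint' : Integrable (fun t => |φ t|) (μR.restrict (Ioo (x i) (y i))) := by
      rw [hμR, Measure.restrict_restrict measurableSet_Ioo, hIoo']
      exact (hφ.mono_set (hIooIcc i)).abs
    have e3 : ENNReal.ofReal (∫ t in Ioo (x i) (y i), |φ t| ∂μR) =
        ∫⁻ t in Ioo (x i) (y i), ENNReal.ofReal |φ t| ∂μR :=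
      ofReal_integral_eq_lintegral_ofReal hint'
        (Filter.Eventually.of_forall fun t => abs_nonneg _)
    calc ENNReal.ofReal |G (y i) - G (x i)| ≤
        ENNReal.ofReal (∫ t in Ioc (x i) (y i), |φ t|) := ENNReal.ofReal_le_ofReal hGi
      _ = ∫⁻ t in Ioo (x i) (y i), ENNReal.ofReal |φ t| ∂μR := by rw [e1, e2, e3]
  have hdisj' : Pairwise (Function.onFun Disjoint (fun i : Fin n => Ioo (x i) (y i))) :=
    fun i j hij => hdisj i j hij
  have hUnion : ∑ i : Fin n, ∫⁻ t in Ioo (x i) (y i), ENNReal.ofReal |φ t| ∂μR =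
      ∫⁻ t in ⋃ i : Fin n, Ioo (x i) (y i), ENNReal.ofReal |φ t| ∂μR := by
    rw [lintegral_iUnion (fun i => measurableSet_Ioo) hdisj', tsum_fintype]
  have hmeas_small : μR (⋃ i : Fin n, Ioo (x i) (y i)) < δ' := by
    have h1 : μR (⋃ i : Fin n, Ioo (x i) (y i)) ≤ volume (⋃ i : Fin n, Ioo (x i) (y i)) :=
      Measure.restrict_apply_le _ _
    have h2 : volume (⋃ i : Fin n, Ioo (x i) (y i)) ≤
        ∑' i : Fin n, volume (Ioo (x i) (y i)) := measure_iUnion_le _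
    have h3 : ∑' i : Fin n, volume (Ioo (x i) (y i)) =
        ENNReal.ofReal (∑ i : Fin n, (y i - x i)) := by
      rw [tsum_fintype]
      have e : ∀ i : Fin n, volume (Ioo (x i) (y i)) = ENNReal.ofReal (y i - x i) :=
        fun i => Real.volume_Ioo
      rw [Finset.sum_congr rfl (fun i _ => e i),
        ← ENNReal.ofReal_sum_of_nonneg (fun i _ => by linarith [(hxy i).2.1])]
    have h4 : ENNReal.ofReal (∑ i : Fin n, (y i - x i)) < δ'' := by
      calc ENNReal.ofReal (∑ i : Fin n, (y i - x i)) ≤ ENNReal.ofReal (δ''.toReal/2) :=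
            ENNReal.ofReal_le_ofReal hsum.le
        _ < ENNReal.ofReal (δ''.toReal) := by
            rw [ENNReal.ofReal_lt_ofReal_iff htR]; linarith
        _ = δ'' := ENNReal.ofReal_toReal hδ''top
    calc μR (⋃ i : Fin n, Ioo (x i) (y i)) ≤ ENNReal.ofReal (∑ i : Fin n, (y i - x i)) :=
          h1.trans (h2.trans_eq h3)
      _ < δ'' := h4
      _ ≤ δ' := min_le_left _ _
  have hfinal : ∑ i : Fin n, ENNReal.ofReal |G (y i) - G (x i)| < ENNReal.ofReal ε := by
    calc ∑ i : Fin n, ENNReal.ofReal |G (y i) - G (x i)|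
        ≤ ∑ i : Fin n, ∫⁻ t in Ioo (x i) (y i), ENNReal.ofReal |φ t| ∂μR :=
          Finset.sum_le_sum fun i _ => key i
      _ = ∫⁻ t in ⋃ i : Fin n, Ioo (x i) (y i), ENNReal.ofReal |φ t| ∂μR := hUnion
      _ < ENNReal.ofReal ε := hsmall _ hmeas_small
  rw [← ENNReal.ofReal_sum_of_nonneg (fun i _ => abs_nonneg _)] at hfinal
  exact (ENNReal.ofReal_lt_ofReal_iff hε).1 hfinal

lemma hasDerivWithinAt_of_integral_eq {φ : ℝ → ℝ} {a b : ℝ}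
    (hφ : IntegrableOn φ (Icc a b) volume) {G : ℝ → ℝ}
    (hG : ∀ x ∈ Icc a b, ∀ y ∈ Icc a b, G y - G x = ∫ t in x..y, φ t) :
    ∀ᵐ x ∂(volume.restrict (Icc a b)), HasDerivWithinAt G (φ x) (Icc a b) x := by
  set g : ℝ → ℝ := (Icc a b).indicator φ with hg
  have hgint : Integrable g volume := by
    rw [hg, integrable_indicator_iff measurableSet_Icc]; exact hφ
  have hloc : LocallyIntegrable g volume := hgint.locallyIntegrable
  have hleb := IsUnifLocDoublingMeasure.ae_tendsto_average_norm_sub (μ := volume) hloc 1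
  have hleb' : ∀ᵐ x ∂(volume.restrict (Icc a b)),
      Filter.Tendsto (fun r => ⨍ y in Metric.closedBall x r, ‖g y - g x‖) (𝓝[>] 0) (𝓝 0) := by
    refine Filter.Eventually.filter_mono (ae_mono Measure.restrict_le_self) ?_
    filter_upwards [hleb] with x hx
    exact hx (fun _ => x) id Filter.tendsto_id
      (by filter_upwards [self_mem_nhdsWithin] with j hj
          exact Metric.mem_closedBall_self (by simpa using le_of_lt hj))
  filter_upwards [hleb', ae_restrict_mem measurableSet_Icc] with x htend hx
  have hgx : g x = φ x := indicator_of_mem hx φ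
  rw [hasDerivWithinAt_iff_isLittleO, Asymptotics.isLittleO_iff]
  intro c hc
  have hev : ∀ᶠ r in 𝓝[>] (0:ℝ),
      (⨍ y in Metric.closedBall x r, ‖g y - g x‖) < c/2 := by
    exact htend.eventually_lt_const (half_pos hc)
  rw [eventually_nhdsWithin_iff, Metric.eventually_nhds_iff] at hev
  obtain ⟨r₀, hr₀, hball⟩ := hev
  rw [eventually_nhdsWithin_iff, Metric.eventually_nhds_iff]
  refine ⟨r₀, hr₀, fun {y} hyx hy => ?_⟩
  rcases eq_or_ne y x with rfl | hne
  · simp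
  set r : ℝ := |y - x| with hr
  have hrpos : 0 < r := abs_pos.2 (sub_ne_zero.2 hne)
  have hrlt : r < r₀ := by rw [hr, ← Real.dist_eq]; exact hyx
  have havg : (⨍ t in Metric.closedBall x r, ‖g t - g x‖) < c/2 :=
    hball (by rw [Real.dist_eq, sub_zero, abs_of_pos hrpos]; exact hrlt) hrpos
  -- rewrite the increment as an interval integral of g
  have hGy : G y - G x = ∫ t in x..y, g t := by
    rw [hG x hx y hy]
    refine intervalIntegral.integral_congr fun t ht => ?_
    have htIcc : t ∈ Icc a b := (Set.ordConnected_Icc.uIcc_subset hx hy) ht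
    rw [hg, indicator_of_mem htIcc]
  have hgInt : ∀ u v : ℝ, IntervalIntegrable g volume u v := fun u v =>
    hgint.intervalIntegrable
  have hIoc_sub : Set.uIoc x y ⊆ Metric.closedBall x r := by
    intro t ht
    rw [Metric.mem_closedBall, Real.dist_eq]
    rcases le_total x y with h | h
    · rw [uIoc_of_le h] at ht
      rw [hr, abs_of_nonneg (by linarith : (0:ℝ) ≤ y - x), abs_le]
      constructor <;> [linarith [ht.1]; linarith [ht.2]]
    · rw [uIoc_of_ge h] at ht
      rw [hr, abs_of_nonpos (by linarith : y - x ≤ 0), abs_le]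
      constructor <;> [linarith [ht.1]; linarith [ht.2]]
  have hIntcb : IntegrableOn (fun t => ‖g t - g x‖) (Metric.closedBall x r) volume :=
    (hgint.integrableOn.sub (integrableOn_const measure_closedBall_lt_top.ne)).norm
  have hvol : (volume (Metric.closedBall x r)).toReal = 2 * r := by
    rw [Real.volume_closedBall]
    rw [ENNReal.toReal_ofReal (by linarith)]
  have h2rpos : (0:ℝ) < 2 * r := by linarith
  calc ‖G y - G x - (y - x) • φ x‖
      = ‖∫ t in x..y, (g t - g x)‖ := by
        rw [hGy, ← hgx, intervalIntegral.integral_sub (hgInt x y) intervalIntegrable_const,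
          intervalIntegral.integral_const]
    _ ≤ ∫ t in Set.uIoc x y, ‖g t - g x‖ := intervalIntegral.norm_integral_le_integral_norm_uIoc
    _ ≤ ∫ t in Metric.closedBall x r, ‖g t - g x‖ := by
        refine setIntegral_mono_set hIntcb ?_ (HasSubset.Subset.eventuallyLE hIoc_sub)
        exact Filter.Eventually.of_forall fun t => norm_nonneg _
    _ = (2 * r) * ⨍ t in Metric.closedBall x r, ‖g t - g x‖ := by
        rw [setAverage_eq, measureReal_def, hvol, smul_eq_mul, ← mul_assoc,
          mul_inv_cancel₀ (ne_of_gt h2rpos), one_mul]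
    _ ≤ (2 * r) * (c/2) := by
        apply mul_le_mul_of_nonneg_left havg.le (by linarith)
    _ = c * r := by ring
    _ = c * ‖y - x‖ := by rw [Real.norm_eq_abs, hr]

lemma AbsolutelyContinuousOn.boundedVariationOn {f : ℝ → ℝ} {a b : ℝ} (hab : a ≤ b)
    (hf : AbsolutelyContinuousOn f a b) : BoundedVariationOn f (Icc a b) := by
  obtain ⟨δ, hδ, hb⟩ := hf 1 one_pos
  have claim1 : ∀ x y : ℝ, x ∈ Icc a b → y ∈ Icc a b → x ≤ y → y - x < δ →
      eVariationOn f (Icc x y) ≤ 1 := by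
    intro x y hx hy hxy hlen
    refine iSup_le ?_
    rintro ⟨n, ⟨u, hu, us⟩⟩
    show ∑ i ∈ Finset.range n, edist (f (u (i + 1))) (f (u i)) ≤ 1
    have hsub : Icc x y ⊆ Icc a b := Icc_subset_Icc hx.1 hy.2
    have hdisj : ∀ i j : Fin n, i ≠ j →
        Disjoint (Ioo (u i) (u (i+1))) (Ioo (u j) (u (j+1))) := by
      have haux : ∀ i j : ℕ, i < j →
          Disjoint (Ioo (u i) (u (i+1))) (Ioo (u j) (u (j+1))) := by
        intro i j hij
        rw [Set.disjoint_left]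
        intro t ht1 ht2
        have h2 : u (i+1) ≤ u j := hu (Nat.succ_le_of_lt hij)
        exact lt_irrefl t (lt_of_lt_of_le ht1.2 (h2.trans ht2.1.le))
      intro i j hij
      rcases Nat.lt_or_ge (i : ℕ) (j : ℕ) with h | h
      · exact haux i j h
      · rcases Nat.lt_or_ge (j : ℕ) (i : ℕ) with h' | h'
        · exact (haux j i h').symm
        · exact absurd (Fin.ext (le_antisymm h' h)) hij
    have happ := hb n (fun i : Fin n => u i) (fun i : Fin n => u ((i : ℕ)+1))
      (fun i => ⟨(hsub (us i)).1, hu (Nat.le_succ i), (hsub (us ((i : ℕ)+1))).2⟩)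
      hdisj
      (by
        have e1 : ∑ i : Fin n, (u ((i : ℕ)+1) - u i) =
            ∑ i ∈ Finset.range n, (u (i+1) - u i) :=
          Fin.sum_univ_eq_sum_range (fun i => u (i+1) - u i) n
        rw [e1, Finset.sum_range_sub]
        have h0 : u 0 ∈ Icc x y := us 0
        have h1 : u n ∈ Icc x y := us n
        have : u n - u 0 ≤ y - x := by linarith [h0.1, h1.2]
        linarith)
    have e2 : ∑ i ∈ Finset.range n, edist (f (u (i + 1))) (f (u i)) =
        ENNReal.ofReal (∑ i ∈ Finset.range n, |f (u (i+1)) - f (u i)|) := by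
      rw [ENNReal.ofReal_sum_of_nonneg (fun i _ => abs_nonneg _)]
      refine Finset.sum_congr rfl fun i _ => ?_
      rw [edist_dist, Real.dist_eq]
    rw [e2]
    have e3 : ∑ i : Fin n, |f (u ((i : ℕ)+1)) - f (u i)| =
        ∑ i ∈ Finset.range n, |f (u (i+1)) - f (u i)| :=
      Fin.sum_univ_eq_sum_range (fun i => |f (u (i+1)) - f (u i)|) n
    rw [e3] at happ
    calc ENNReal.ofReal (∑ i ∈ Finset.range n, |f (u (i+1)) - f (u i)|)
        ≤ ENNReal.ofReal 1 := ENNReal.ofReal_le_ofReal happ.le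
      _ = 1 := ENNReal.ofReal_one
  have claim2 : ∀ n : ℕ, ∀ x, x ∈ Icc a b → b - x ≤ (n+1) * (δ/2) →
      eVariationOn f (Icc x b) ≤ (n : ℝ≥0∞) + 1 := by
    intro n
    induction n with
    | zero =>
        intro x hx hlen
        simp only [Nat.cast_zero, zero_add, Nat.cast_ofNat] at hlen ⊢
        exact claim1 x b hx ⟨hab, le_refl b⟩ hx.2 (by linarith)
    | succ n ih =>
        intro x hx hlen
        by_cases h : b - x ≤ (n+1) * (δ/2)
        · calc eVariationOn f (Icc x b) ≤ (n : ℝ≥0∞) + 1 := ih x hx h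
            _ ≤ (↑(n+1) : ℝ≥0∞) + 1 := by
                gcongr
                exact_mod_cast Nat.le_succ n
        · push_neg at h
          have hm1 : x + δ/2 ≤ b := by
            have : ((n:ℝ)+1) * (δ/2) ≥ 1 * (δ/2) := by
              apply mul_le_mul_of_nonneg_right _ (by linarith)
              push_cast; linarith [Nat.cast_nonneg (α := ℝ) n]
            linarith
          have hmIcc : x + δ/2 ∈ Icc a b := ⟨by linarith [hx.1], hm1⟩
          have hsplit := eVariationOn.Icc_add_Icc f (s := univ)
            (a := x) (b := x + δ/2) (c := b) (by linarith) hm1 (mem_univ _)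
          simp only [univ_inter] at hsplit
          rw [← hsplit]
          have hv1 : eVariationOn f (Icc x (x + δ/2)) ≤ 1 :=
            claim1 x (x + δ/2) hx hmIcc (by linarith) (by linarith)
          have hv2 : eVariationOn f (Icc (x + δ/2) b) ≤ (n : ℝ≥0∞) + 1 := by
            apply ih (x + δ/2) hmIcc
            push_cast at hlen ⊢
            linarith
          calc eVariationOn f (Icc x (x + δ/2)) + eVariationOn f (Icc (x + δ/2) b)
              ≤ 1 + ((n : ℝ≥0∞) + 1) := add_le_add hv1 hv2
            _ = (↑(n+1) : ℝ≥0∞) + 1 := by push_cast; ring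
  obtain ⟨n, hn⟩ := exists_nat_ge ((b - a) / (δ/2))
  have hlen : b - a ≤ (n+1) * (δ/2) := by
    rw [div_le_iff₀ (by linarith)] at hn
    nlinarith
  have hfin := claim2 n a ⟨le_refl a, hab⟩ hlen
  exact ne_top_of_le_ne_top
    (ENNReal.add_lt_top.2 ⟨ENNReal.natCast_lt_top n, ENNReal.one_lt_top⟩).ne hfin

lemma Monotone.deriv_nonneg' {p : ℝ → ℝ} (hp : Monotone p) (t : ℝ) : 0 ≤ deriv p t := by
  by_cases h : DifferentiableAt ℝ p t
  · by_contra hneg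
    push_neg at hneg
    have hd := h.hasDerivAt
    rw [hasDerivAt_iff_isLittleO, Asymptotics.isLittleO_iff] at hd
    have hev := hd (show (0:ℝ) < -(deriv p t)/2 by linarith)
    rw [Metric.eventually_nhds_iff] at hev
    obtain ⟨r, hr, hball⟩ := hev
    set y := t + r/2 with hy
    have hdist : dist y t < r := by
      rw [Real.dist_eq, hy]
      rw [show t + r/2 - t = r/2 by ring, abs_of_pos (by linarith)]
      linarith
    have hb := hball hdist
    rw [Real.norm_eq_abs, Real.norm_eq_abs, smul_eq_mul] at hb
    have hyt : y - t = r/2 := by rw [hy]; ring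
    rw [hyt] at hb
    rw [abs_of_pos (by linarith : (0:ℝ) < r/2)] at hb
    have hble := (abs_le.1 hb).2
    have hpy : p t ≤ p y := hp (by rw [hy]; linarith)
    nlinarith
  · rw [deriv_zero_of_not_differentiableAt h]

lemma lintegral_deriv_le_of_monotone {p : ℝ → ℝ} (hp : Monotone p) {a b : ℝ} (hab : a ≤ b) :
    ∫⁻ t in Ioo a b, ENNReal.ofReal (deriv p t) ≤ ENNReal.ofReal (p (b+1) - p a) := by
  have hpmeas : Measurable p := hp.measurable
  set F : ℕ → ℝ → ℝ≥0∞ :=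
    fun n t => ENNReal.ofReal (((n:ℝ)+1) * (p (t + 1/((n:ℝ)+1)) - p t)) with hF
  have hshift : ∀ c : ℝ, Monotone (fun t => p (t + c)) :=
    fun c => hp.comp (fun x y hxy => by simpa using hxy)
  have hmeas : ∀ n, Measurable (F n) := fun n =>
    ENNReal.measurable_ofReal.comp ((((hshift _).measurable).sub hpmeas).const_mul _)
  have hpt : ∀ t, ENNReal.ofReal (deriv p t) ≤ Filter.liminf (fun n => F n t) Filter.atTop := by
    intro t
    by_cases h : DifferentiableAt ℝ p t
    · have hd := h.hasDerivAt
      rw [hasDerivAt_iff_tendsto_slope] at hd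
      have hseq : Filter.Tendsto (fun n : ℕ => t + 1/((n:ℝ)+1)) Filter.atTop (𝓝[≠] t) := by
        rw [tendsto_nhdsWithin_iff]
        constructor
        · have h1 := tendsto_one_div_add_atTop_nhds_zero_nat (𝕜 := ℝ)
          have h2 : Filter.Tendsto (fun n : ℕ => t + 1/((n:ℝ)+1)) Filter.atTop (𝓝 (t + 0)) :=
            tendsto_const_nhds.add h1
          simpa using h2
        · filter_upwards with n
          have hpos : (0:ℝ) < 1/((n:ℝ)+1) := by positivity
          exact (lt_add_of_pos_right t hpos).ne'
      have hcomp := hd.comp hseq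
      have heq : (fun n : ℕ => slope p t (t + 1/((n:ℝ)+1))) =
          (fun n : ℕ => ((n:ℝ)+1) * (p (t + 1/((n:ℝ)+1)) - p t)) := by
        funext n
        rw [slope_def_field, show t + 1/((n:ℝ)+1) - t = 1/((n:ℝ)+1) by ring]
        have hne : ((n:ℝ)+1) ≠ 0 := by positivity
        field_simp
      rw [show (fun n : ℕ => slope p t (t + 1/((n:ℝ)+1))) = slope p t ∘ (fun n : ℕ => t + 1/((n:ℝ)+1)) from rfl] at heq
      rw [heq] at hcomp
      have htendE : Filter.Tendsto (fun n => F n t) Filter.atTop (𝓝 (ENNReal.ofReal (deriv p t))) :=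
        (ENNReal.continuous_ofReal.tendsto _).comp hcomp
      rw [htendE.liminf_eq]
    · rw [deriv_zero_of_not_differentiableAt h, ENNReal.ofReal_zero]
      exact zero_le
  have hbound : ∀ n : ℕ, (∫⁻ t in Ioo a b, F n t) ≤ ENNReal.ofReal (p (b+1) - p a) := by
    intro n
    set c : ℝ := 1/((n:ℝ)+1) with hcdef
    have hcpos : 0 < c := by positivity
    have hc1 : c ≤ 1 := by
      rw [hcdef, div_le_one (by positivity)]
      linarith [Nat.cast_nonneg (α := ℝ) n]
    have hint : IntegrableOn p (Icc a (b+1)) volume :=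
      (hp.monotoneOn _).integrableOn_isCompact isCompact_Icc
    have hii : ∀ x y, a ≤ x → x ≤ y → y ≤ b+1 → IntervalIntegrable p volume x y := by
      intro x y hx hxy hy
      rw [intervalIntegrable_iff]
      refine hint.mono_set fun w hw => ?_
      rw [uIoc_of_le hxy] at hw
      exact ⟨hx.trans hw.1.le, hw.2.trans hy⟩
    have hshiftint : IntegrableOn (fun t => p (t + c)) (Icc a b) volume :=
      (((hshift c).monotoneOn _).integrableOn_isCompact isCompact_Icc)
    have hfnint : Integrable (fun t => ((n:ℝ)+1) * (p (t + c) - p t))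
        (volume.restrict (Ioo a b)) := by
      refine Integrable.const_mul ?_ _
      exact ((hshiftint.mono_set Ioo_subset_Icc_self).sub
        ((hint.mono_set (Icc_subset_Icc le_rfl (by linarith))).mono_set Ioo_subset_Icc_self))
    have hfn_nonneg : ∀ t, 0 ≤ ((n:ℝ)+1) * (p (t + c) - p t) := by
      intro t
      have : p t ≤ p (t + c) := hp (by linarith)
      have hn : (0:ℝ) ≤ (n:ℝ)+1 := by positivity
      nlinarith
    have e0 : (∫⁻ t in Ioo a b, F n t) =
        ENNReal.ofReal (∫ t in Ioo a b, ((n:ℝ)+1) * (p (t + c) - p t)) :=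
      (ofReal_integral_eq_lintegral_ofReal hfnint
        (Filter.Eventually.of_forall hfn_nonneg)).symm
    rw [e0]
    apply ENNReal.ofReal_le_ofReal
    have eint : ∫ t in Ioo a b, ((n:ℝ)+1) * (p (t + c) - p t) =
        ((n:ℝ)+1) * ((∫ t in Ioo a b, p (t + c)) - ∫ t in Ioo a b, p t) := by
      rw [← integral_sub (hshiftint.mono_set Ioo_subset_Icc_self)
        (((hint.mono_set (Icc_subset_Icc le_rfl (by linarith))).mono_set Ioo_subset_Icc_self))]
      exact integral_const_mul _ _
    rw [eint]
    have ha1 : ∫ t in Ioo a b, p (t + c) = ∫ t in a..b, p (t + c) := by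
      rw [intervalIntegral.integral_of_le hab, integral_Ioc_eq_integral_Ioo]
    have ha2 : ∫ t in Ioo a b, p t = ∫ t in a..b, p t := by
      rw [intervalIntegral.integral_of_le hab, integral_Ioc_eq_integral_Ioo]
    rw [ha1, ha2, intervalIntegral.integral_comp_add_right p c]
    have e1 : (∫ t in a..(a+c), p t) + (∫ t in (a+c)..(b+c), p t) = ∫ t in a..(b+c), p t :=
      intervalIntegral.integral_add_adjacent_intervals
        (hii a (a+c) le_rfl (by linarith) (by linarith))
        (hii (a+c) (b+c) (by linarith) (by linarith) (by linarith))
    have e2 : (∫ t in a..b, p t) + (∫ t in b..(b+c), p t) = ∫ t in a..(b+c), p t :=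
      intervalIntegral.integral_add_adjacent_intervals
        (hii a b le_rfl hab (by linarith))
        (hii b (b+c) hab (by linarith) (by linarith))
    have m1 : (∫ t in b..(b+c), p t) ≤ c * p (b+1) := by
      have := intervalIntegral.integral_mono_on (by linarith : b ≤ b+c)
        (hii b (b+c) hab (by linarith) (by linarith)) intervalIntegrable_const
        (fun x hx => hp (by linarith [hx.2] : x ≤ b+1))
      rwa [intervalIntegral.integral_const, smul_eq_mul,
        show b + c - b = c by ring] at this
    have m2 : c * p a ≤ ∫ t in a..(a+c), p t := by
      have := intervalIntegral.integral_mono_on (by linarith : a ≤ a+c)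
        intervalIntegrable_const (hii a (a+c) le_rfl (by linarith) (by linarith))
        (fun x hx => hp (hx.1 : a ≤ x))
      rwa [intervalIntegral.integral_const, smul_eq_mul,
        show a + c - a = c by ring] at this
    have hdiff : (∫ t in (a+c)..(b+c), p t) - ∫ t in a..b, p t ≤ c * (p (b+1) - p a) := by
      have : (∫ t in (a+c)..(b+c), p t) - (∫ t in a..b, p t) =
          (∫ t in b..(b+c), p t) - ∫ t in a..(a+c), p t := by linarith
      rw [this]; nlinarith
    calc ((n:ℝ)+1) * ((∫ t in (a+c)..(b+c), p t) - ∫ t in a..b, p t)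
        ≤ ((n:ℝ)+1) * (c * (p (b+1) - p a)) := by
          apply mul_le_mul_of_nonneg_left hdiff (by positivity)
      _ = (((n:ℝ)+1) * c) * (p (b+1) - p a) := by ring
      _ = p (b+1) - p a := by
          rw [hcdef]
          rw [show ((n:ℝ)+1) * (1/((n:ℝ)+1)) = 1 by field_simp]
          ring
  calc ∫⁻ t in Ioo a b, ENNReal.ofReal (deriv p t)
      ≤ ∫⁻ t in Ioo a b, Filter.liminf (fun n => F n t) Filter.atTop := lintegral_mono hpt
    _ ≤ Filter.liminf (fun n => ∫⁻ t in Ioo a b, F n t) Filter.atTop :=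
        lintegral_liminf_le hmeas
    _ ≤ ENNReal.ofReal (p (b+1) - p a) :=
        Filter.liminf_le_of_frequently_le ((Filter.Eventually.of_forall hbound).frequently)

lemma ac_const_of_deriv_zero {ψ : ℝ → ℝ} {a b : ℝ}
    (hψ : AbsolutelyContinuousOn ψ a b) (hcont : ContinuousOn ψ (Icc a b))
    (hd : ∀ᵐ t ∂(volume.restrict (Icc a b)), HasDerivWithinAt ψ 0 (Icc a b) t) :
    ∀ x ∈ Icc a b, ψ x = ψ a := by
  intro x hx
  have hab : a ≤ b := hx.1.trans hx.2
  have hax : a ≤ x := hx.1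
  set Z : Set ℝ := {t | t ∈ Icc a b ∧ HasDerivWithinAt ψ 0 (Icc a b) t} with hZ
  have hWnull : volume (Icc a b \ Z) = 0 := by
    have h1 : volume.restrict (Icc a b) {t | ¬ HasDerivWithinAt ψ 0 (Icc a b) t} = 0 :=
      ae_iff.1 hd
    have h2 : Icc a b \ Z = {t | ¬ HasDerivWithinAt ψ 0 (Icc a b) t} ∩ Icc a b := by
      ext t
      simp only [hZ, mem_diff, mem_setOf_eq, mem_inter_iff]
      tauto
    rw [h2, ← Measure.restrict_apply' measurableSet_Icc]
    exact h1
  -- image of the good set is null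
  have hZx : volume (ψ '' (Z ∩ Icc a x)) = 0 := by
    refine le_antisymm ?_ zero_le
    refine ENNReal.le_of_forall_pos_le_add fun ε0 hε0 _ => ?_
    rw [zero_add, ← ENNReal.ofReal_coe_nnreal]
    set ε : ℝ := (ε0 : ℝ) / ((x - a) + 1) with hεdef
    have hε : 0 < ε := by
      have : (0:ℝ) < (ε0:ℝ) := hε0
      have hxa : (0:ℝ) < (x - a) + 1 := by linarith
      positivity
    set A : ℕ → Set ℝ := fun m =>
      {t | t ∈ Z ∩ Icc a x ∧
        ∀ t' ∈ Icc a b, |t' - t| ≤ 1/((m:ℝ)+1) → |ψ t' - ψ t| ≤ ε * |t' - t|} with hA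
    have hAmono : Monotone A := by
      intro m m' hmm' t ht
      refine ⟨ht.1, fun t' ht' hd' => ht.2 t' ht' (hd'.trans ?_)⟩
      apply one_div_le_one_div_of_le (by positivity)
      have : (m:ℝ) ≤ (m':ℝ) := by exact_mod_cast hmm'
      linarith
    have hcover : Z ∩ Icc a x ⊆ ⋃ m, A m := by
      intro t ht
      have hder := ht.1.2
      rw [hasDerivWithinAt_iff_isLittleO, Asymptotics.isLittleO_iff] at hder
      have hev := hder hε
      rw [eventually_nhdsWithin_iff, Metric.eventually_nhds_iff] at hev
      obtain ⟨r, hr, hball⟩ := hev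
      obtain ⟨m, hm⟩ := exists_nat_one_div_lt hr
      refine mem_iUnion.2 ⟨m, ht, fun t' ht' hdist => ?_⟩
      have hb := hball (by rw [Real.dist_eq]; exact lt_of_le_of_lt hdist (by exact_mod_cast hm)) ht'
      rw [Real.norm_eq_abs, Real.norm_eq_abs, smul_eq_mul, mul_zero, sub_zero] at hb
      exact hb
    have himg : ψ '' (Z ∩ Icc a x) ⊆ ⋃ m, ψ '' (A m) := by
      rw [← image_iUnion]
      exact image_mono hcover
    have hmono2 : Monotone (fun m => ψ '' (A m)) := fun m m' h => image_mono (hAmono h)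
    have hAmbound : ∀ m, volume (ψ '' (A m)) ≤ ENNReal.ofReal (ε * ((x - a) + 1)) := by
      intro m
      set h : ℝ := 1/((m:ℝ)+1) with hhdef
      have hhpos : 0 < h := by positivity
      have hh1 : h ≤ 1 := by
        rw [hhdef, div_le_one (by positivity)]
        linarith [Nat.cast_nonneg (α := ℝ) m]
      set K : ℕ := ⌊(x - a) / h⌋₊ + 1 with hK
      have hAIcc : ∀ t, t ∈ A m → t ∈ Icc a x := fun t ht => ht.1.2
      have hAab : ∀ t, t ∈ A m → t ∈ Icc a b := fun t ht => ht.1.1.1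
      have hgrid : A m ⊆ ⋃ j ∈ Finset.range K, (A m ∩ Icc (a + j * h) (a + (j+1) * h)) := by
        intro t ht
        have htIcc := hAIcc t ht
        have htnn : 0 ≤ (t - a) / h := div_nonneg (by linarith [htIcc.1]) hhpos.le
        refine mem_iUnion₂.2 ⟨⌊(t - a) / h⌋₊, ?_, ht, ?_, ?_⟩
        · rw [Finset.mem_range, hK]
          have hle : (t - a) / h ≤ (x - a) / h := by
            gcongr
            exact htIcc.2
          exact Nat.lt_succ_of_le (Nat.floor_le_floor hle)
        · have h1 : (⌊(t - a) / h⌋₊ : ℝ) ≤ (t - a) / h := Nat.floor_le htnn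
          have h2 : (⌊(t - a) / h⌋₊ : ℝ) * h ≤ t - a := by
            calc (⌊(t - a) / h⌋₊ : ℝ) * h ≤ ((t - a) / h) * h :=
                  mul_le_mul_of_nonneg_right h1 hhpos.le
              _ = t - a := div_mul_cancel₀ _ (ne_of_gt hhpos)
          linarith
        · have h1 : (t - a) / h < (⌊(t - a) / h⌋₊ : ℝ) + 1 := Nat.lt_floor_add_one _
          have h2 : t - a < ((⌊(t - a) / h⌋₊ : ℝ) + 1) * h := by
            calc t - a = ((t - a) / h) * h := (div_mul_cancel₀ _ (ne_of_gt hhpos)).symm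
              _ < ((⌊(t - a) / h⌋₊ : ℝ) + 1) * h := by
                  apply mul_lt_mul_of_pos_right h1 hhpos
          linarith
      have himg2 : ψ '' (A m) ⊆ ⋃ j ∈ Finset.range K, ψ '' (A m ∩ Icc (a + j * h) (a + (j+1) * h)) := by
        intro z hz
        obtain ⟨t, ht, rfl⟩ := hz
        obtain ⟨j, hj, hmem⟩ := mem_iUnion₂.1 (hgrid ht)
        exact mem_iUnion₂.2 ⟨j, hj, mem_image_of_mem ψ hmem⟩
      have hpiece : ∀ j : ℕ, volume (ψ '' (A m ∩ Icc (a + j * h) (a + (j+1) * h))) ≤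
          ENNReal.ofReal (ε * h) := by
        intro j
        refine (Real.volume_le_diam _).trans (EMetric.diam_le ?_)
        rintro _ ⟨u1, hu1, rfl⟩ _ ⟨u2, hu2, rfl⟩
        rw [edist_dist, Real.dist_eq]
        apply ENNReal.ofReal_le_ofReal
        have hdist : |u1 - u2| ≤ h := by
          have ha1 := hu1.2.1; have ha2 := hu1.2.2
          have hb1 := hu2.2.1; have hb2 := hu2.2.2
          rw [abs_le]; constructor <;> nlinarith
        have := hu2.1.2 u1 (hAab u1 hu1.1) hdist
        calc |ψ u1 - ψ u2| ≤ ε * |u1 - u2| := this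
          _ ≤ ε * h := mul_le_mul_of_nonneg_left hdist hε.le
      calc volume (ψ '' (A m))
          ≤ ∑ j ∈ Finset.range K, volume (ψ '' (A m ∩ Icc (a + j * h) (a + (j+1) * h))) :=
            (measure_mono himg2).trans (measure_biUnion_finset_le _ _)
        _ ≤ ∑ _j ∈ Finset.range K, ENNReal.ofReal (ε * h) :=
            Finset.sum_le_sum fun j _ => hpiece j
        _ = (K : ℝ≥0∞) * ENNReal.ofReal (ε * h) := by
            rw [Finset.sum_const, Finset.card_range, nsmul_eq_mul]
        _ = ENNReal.ofReal ((K : ℝ) * (ε * h)) := by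
            rw [ENNReal.ofReal_mul (by positivity : (0:ℝ) ≤ (K:ℝ)), ENNReal.ofReal_natCast]
        _ ≤ ENNReal.ofReal (ε * ((x - a) + 1)) := by
            apply ENNReal.ofReal_le_ofReal
            have hKh : (K : ℝ) * h ≤ (x - a) + 1 := by
              rw [hK]
              push_cast
              have h1 : (⌊(x - a) / h⌋₊ : ℝ) ≤ (x - a) / h := Nat.floor_le
                (div_nonneg (by linarith) hhpos.le)
              have h2 : ((⌊(x - a) / h⌋₊ : ℝ) + 1) * h ≤ ((x - a)/h + 1) * h := by
                apply mul_le_mul_of_nonneg_right _ hhpos.le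
                linarith
              have h3 : ((x - a)/h + 1) * h = (x - a) + h := by
                field_simp
              nlinarith
            nlinarith [hε.le, hhpos.le, mul_le_mul_of_nonneg_left hKh hε.le]
    calc volume (ψ '' (Z ∩ Icc a x)) ≤ volume (⋃ m, ψ '' (A m)) := measure_mono himg
      _ = ⨆ m, volume (ψ '' (A m)) := hmono2.measure_iUnion
      _ ≤ ENNReal.ofReal (ε * ((x - a) + 1)) := iSup_le hAmbound
      _ = ENNReal.ofReal (ε0 : ℝ) := by
          congr 1
          rw [hεdef, div_mul_cancel₀ _ (by linarith : (0:ℝ) < x - a + 1).ne']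
  -- image of the exceptional set is null
  have hWx : volume (ψ '' (Icc a x \ Z)) = 0 := by
    refine AbsolutelyContinuousOn.image_null hψ (fun t ht => ?_) ?_
    · exact ⟨ht.1.1, ht.1.2.trans hx.2⟩
    · refine measure_mono_null (fun t ht => ?_) hWnull
      exact ⟨⟨ht.1.1, ht.1.2.trans hx.2⟩, ht.2⟩
  -- total image null
  have htot : volume (ψ '' Icc a x) = 0 := by
    have hsplit : ψ '' Icc a x ⊆ ψ '' (Z ∩ Icc a x) ∪ ψ '' (Icc a x \ Z) := by
      rintro _ ⟨t, ht, rfl⟩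
      by_cases h : t ∈ Z
      · exact Or.inl (mem_image_of_mem ψ ⟨h, ht⟩)
      · exact Or.inr (mem_image_of_mem ψ ⟨ht, h⟩)
    refine measure_mono_null hsplit ?_
    refine measure_union_null hZx hWx
  -- intermediate value theorem
  have hIVT : uIcc (ψ a) (ψ x) ⊆ ψ '' Icc a x := by
    have hcont' : ContinuousOn ψ (uIcc a x) := by
      rw [uIcc_of_le hax]
      exact hcont.mono (Icc_subset_Icc le_rfl hx.2)
    have := intermediate_value_uIcc hcont'
    rwa [uIcc_of_le hax] at this
  have : volume (uIcc (ψ a) (ψ x)) = 0 := measure_mono_null hIVT htot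
  rw [uIcc, Real.volume_Icc, ← ENNReal.ofReal_zero] at this
  have h0 : max (ψ a) (ψ x) - min (ψ a) (ψ x) ≤ 0 := by
    by_contra hcon
    push_neg at hcon
    rw [ENNReal.ofReal_eq_ofReal_iff (le_of_lt hcon) le_rfl] at this
    linarith
  rw [max_sub_min_eq_abs] at h0
  have habs0 : |ψ x - ψ a| = 0 := le_antisymm h0 (abs_nonneg _)
  have h00 := abs_eq_zero.1 habs0
  linarith

/-- Change of variable for the Lebesgue integral: let `f` be Lebesgue integrable over
`[c,d]`, `F x = ∫_c^x f`, and `u : [a,b] → [c,d]` differentiable a.e. (with derivative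
`u'`). Then `F ∘ u` is absolutely continuous on `[a,b]` iff `(f ∘ u)·u'` is Lebesgue
integrable over `[a,b]` and `∫_{u α}^{u β} f = ∫_α^β f(u t) u'(t) dt` for all
`α, β ∈ [a,b]`. -/
theorem change_of_variable_lebesgue (a b c d : ℝ) (f u u' : ℝ → ℝ)
    (hf : IntegrableOn f (Icc c d) volume)
    (hmaps : MapsTo u (Icc a b) (Icc c d))
    (hu : ∀ᵐ t ∂(volume.restrict (Icc a b)), HasDerivWithinAt u (u' t) (Icc a b) t)
    (F : ℝ → ℝ) (hF : ∀ x, F x = ∫ t in c..x, f t) :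
    AbsolutelyContinuousOn (F ∘ u) a b ↔
      (IntegrableOn (fun t => f (u t) * u' t) (Icc a b) volume ∧
        ∀ α ∈ Icc a b, ∀ β ∈ Icc a b,
          (∫ x in u α..u β, f x) = ∫ t in α..β, f (u t) * u' t) := by
  rcases le_or_gt a b with hab | hba
  swap
  · have hempty : Icc a b = ∅ := Icc_eq_empty (not_le.2 hba)
    constructor
    · intro _
      constructor
      · rw [hempty]; exact integrableOn_empty
      · intro α hα
        rw [hempty] at hα
        exact absurd hα (notMem_empty α)
    · intro _ ε hε
      refine ⟨1, one_pos, fun n x y hxy hdisj hsum => ?_⟩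
      cases n with
      | zero => simpa using hε
      | succ n =>
          exact absurd ((hxy 0).1.trans ((hxy 0).2.1.trans (hxy 0).2.2)) (not_le.2 hba)
  have hcd : c ≤ d := by
    have h1 := hmaps (left_mem_Icc.2 hab)
    exact h1.1.trans h1.2
  have hfI : ∀ x ∈ Icc c d, ∀ y ∈ Icc c d, IntervalIntegrable f volume x y := by
    intro x hx y hy
    rw [intervalIntegrable_iff]
    exact hf.mono_set fun w hw =>
      (Set.ordConnected_Icc.uIcc_subset hx hy) (Ioc_subset_Icc_self hw)
  have hFadd : ∀ x ∈ Icc c d, ∀ y ∈ Icc c d, F y - F x = ∫ t in x..y, f t := by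
    intro x hx y hy
    rw [hF x, hF y]
    exact intervalIntegral.integral_interval_sub_left
      (hfI c (left_mem_Icc.2 hcd) y hy) (hfI c (left_mem_Icc.2 hcd) x hx)
  set φ : ℝ → ℝ := fun t => f (u t) * u' t with hφdef
  set G : ℝ → ℝ := F ∘ u with hGdef
  have hφI : ∀ (hInt : IntegrableOn φ (Icc a b) volume),
      ∀ x ∈ Icc a b, ∀ y ∈ Icc a b, IntervalIntegrable φ volume x y := by
    intro hInt x hx y hy
    rw [intervalIntegrable_iff]
    exact hInt.mono_set fun w hw =>
      (Set.ordConnected_Icc.uIcc_subset hx hy) (Ioc_subset_Icc_self hw)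
  constructor
  · -- forward direction
    intro hGAC
    -- Lebesgue points of f
    have hFderiv := hasDerivWithinAt_of_integral_eq hf (G := F) hFadd
    obtain ⟨NE, hNEnull, hNEgood⟩ : ∃ NE : Set ℝ, volume NE = 0 ∧
        ∀ x ∈ Icc c d, x ∉ NE → HasDerivWithinAt F (f x) (Icc c d) x := by
      have h1 : volume ({x | ¬ HasDerivWithinAt F (f x) (Icc c d) x} ∩ Icc c d) = 0 := by
        rw [← Measure.restrict_apply' measurableSet_Icc]
        exact ae_iff.1 hFderiv
      exact ⟨_, h1, fun x hx hxn => by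
        by_contra hbad
        exact hxn ⟨hbad, hx⟩⟩
    obtain ⟨NU, hNUnull, hNUgood⟩ : ∃ NU : Set ℝ, volume NU = 0 ∧
        ∀ t ∈ Icc a b, t ∉ NU → HasDerivWithinAt u (u' t) (Icc a b) t := by
      have h1 : volume ({t | ¬ HasDerivWithinAt u (u' t) (Icc a b) t} ∩ Icc a b) = 0 := by
        rw [← Measure.restrict_apply' measurableSet_Icc]
        exact ae_iff.1 hu
      exact ⟨_, h1, fun t ht htn => by
        by_contra hbad
        exact htn ⟨hbad, ht⟩⟩
    have hGBV : BoundedVariationOn G (Icc a b) :=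
      AbsolutelyContinuousOn.boundedVariationOn hab hGAC
    have hGLBV : LocallyBoundedVariationOn G (Icc a b) :=
      fun x y _ _ => hGBV.mono inter_subset_left
    have hGdiff := hGLBV.ae_differentiableWithinAt measurableSet_Icc
    obtain ⟨NG, hNGnull, hNGgood⟩ : ∃ NG : Set ℝ, volume NG = 0 ∧
        ∀ t ∈ Icc a b, t ∉ NG → DifferentiableWithinAt ℝ G (Icc a b) t := by
      have h1 : volume ({t | ¬ DifferentiableWithinAt ℝ G (Icc a b) t} ∩ Icc a b) = 0 := by
        rw [← Measure.restrict_apply' measurableSet_Icc]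
        exact ae_iff.1 hGdiff
      exact ⟨_, h1, fun t ht htn => by
        by_contra hbad
        exact htn ⟨hbad, ht⟩⟩
    set s2 : Set ℝ := {t | t ∈ Icc a b ∧ t ∉ NU ∧ u t ∈ NE} with hs2def
    have hs2u : volume {t ∈ s2 | u' t ≠ 0} = 0 := by
      refine deriv_zero_of_image_null (v := u) (v' := u') ?_ ?_
      · exact fun t ht => (hNUgood t ht.1 ht.2.1).mono (fun w hw => hw.1)
      · refine measure_mono_null ?_ hNEnull
        rintro _ ⟨t, ht, rfl⟩
        exact ht.2.2
    set s2' : Set ℝ := {t | t ∈ s2 ∧ t ∉ NG} with hs2'def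
    have hFAC : AbsolutelyContinuousOn F c d := by
      refine ac_of_integral_bound hf fun x hx y hy hxy => ?_
      rw [hFadd x hx y hy, intervalIntegral.integral_of_le hxy]
      exact MeasureTheory.norm_integral_le_integral_norm f
    have hs2G : volume {t ∈ s2' | derivWithin G (Icc a b) t ≠ 0} = 0 := by
      refine deriv_zero_of_image_null (v := G)
        (v' := fun t => derivWithin G (Icc a b) t) ?_ ?_
      · exact fun t ht => ((hNGgood t ht.1.1 ht.2).hasDerivWithinAt).mono (fun w hw => hw.1.1)
      · have hFLuzin : volume (F '' (NE ∩ Icc c d)) = 0 :=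
          AbsolutelyContinuousOn.image_null hFAC inter_subset_right
            (measure_mono_null inter_subset_left hNEnull)
        refine measure_mono_null ?_ hFLuzin
        rintro _ ⟨t, ht, rfl⟩
        exact ⟨u t, ⟨ht.1.2.2, hmaps ht.1.1⟩, rfl⟩
    -- the key a.e. derivative statement
    have hkey : ∀ᵐ t ∂(volume.restrict (Icc a b)), HasDerivWithinAt G (φ t) (Icc a b) t := by
      have hN : volume (NU ∪ NG ∪ {t ∈ s2 | u' t ≠ 0} ∪
          {t ∈ s2' | derivWithin G (Icc a b) t ≠ 0}) = 0 :=
        measure_union_null (measure_union_null (measure_union_null hNUnull hNGnull) hs2u) hs2G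
      have hNae : ∀ᵐ t ∂(volume.restrict (Icc a b)), t ∉ (NU ∪ NG ∪ {t ∈ s2 | u' t ≠ 0} ∪
          {t ∈ s2' | derivWithin G (Icc a b) t ≠ 0}) :=
        Filter.Eventually.filter_mono (ae_mono Measure.restrict_le_self)
          (measure_eq_zero_iff_ae_notMem.1 hN)
      filter_upwards [hNae, ae_restrict_mem measurableSet_Icc] with t hnot htIcc
      simp only [mem_union, not_or] at hnot
      obtain ⟨⟨⟨hNU', hNG'⟩, hu'0⟩, hG'0⟩ := hnot
      have hud := hNUgood t htIcc hNU'
      by_cases hE : u t ∈ NE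
      · have hts2 : t ∈ s2 := ⟨htIcc, hNU', hE⟩
        have hu0 : u' t = 0 := by
          by_contra hne
          exact hu'0 ⟨hts2, hne⟩
        have hts2' : t ∈ s2' := ⟨hts2, hNG'⟩
        have hd0 : derivWithin G (Icc a b) t = 0 := by
          by_contra hne
          exact hG'0 ⟨hts2', hne⟩
        have hdw := (hNGgood t htIcc hNG').hasDerivWithinAt
        rw [hd0] at hdw
        have hzero : φ t = 0 := by rw [hφdef]; simp [hu0]
        rw [hzero]
        exact hdw
      · have hFd := hNEgood (u t) (hmaps htIcc) hE
        exact hFd.comp t hud hmaps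
    -- a.e. membership in the open interval
    have haeIoo : ∀ᵐ t ∂(volume.restrict (Icc a b)), t ∈ Ioo a b := by
      have hnull : volume (Icc a b \ Ioo a b) = 0 := by
        refine measure_mono_null (fun t ht => ?_) (Set.Finite.measure_zero
          ((Set.finite_singleton b).insert a) volume)
        rcases eq_or_ne t a with rfl | hta
        · exact mem_insert _ _
        · rcases eq_or_ne t b with rfl | htb
          · exact mem_insert_of_mem _ rfl
          · exact absurd ⟨lt_of_le_of_ne ht.1.1 (Ne.symm hta),
              lt_of_le_of_ne ht.1.2 htb⟩ ht.2
      refine Filter.Eventually.mp (ae_restrict_mem measurableSet_Icc) ?_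
      refine Filter.Eventually.filter_mono (ae_mono Measure.restrict_le_self) ?_
      filter_upwards [measure_eq_zero_iff_ae_notMem.1 hnull] with t ht htIcc
      by_contra hcon
      exact ht ⟨htIcc, hcon⟩
    -- measurability of φ
    have hφmeas : AEStronglyMeasurable φ (volume.restrict (Icc a b)) := by
      have heq : φ =ᵐ[volume.restrict (Icc a b)] deriv G := by
        filter_upwards [hkey, haeIoo] with t hd hIoo
        have hA : HasDerivAt G (φ t) t := hd.hasDerivAt (Icc_mem_nhds hIoo.1 hIoo.2)
        exact hA.deriv.symm
      exact ((measurable_deriv G).aestronglyMeasurable).congr heq.symm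
    -- monotone decomposition and finiteness
    obtain ⟨p, q, hpmono, hqmono, hpq⟩ := hGLBV.exists_monotoneOn_sub_monotoneOn
    set pt : ℝ → ℝ := fun t => p ((projIcc a b hab t : ℝ)) with hptdef
    set qt : ℝ → ℝ := fun t => q ((projIcc a b hab t : ℝ)) with hqtdef
    have hptmono : Monotone pt := fun x y hxy =>
      hpmono (projIcc a b hab x).2 (projIcc a b hab y).2 (monotone_projIcc hab hxy)
    have hqtmono : Monotone qt := fun x y hxy =>
      hqmono (projIcc a b hab x).2 (projIcc a b hab y).2 (monotone_projIcc hab hxy)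
    have hGeq : ∀ t ∈ Icc a b, G t = pt t - qt t := by
      intro t ht
      rw [hptdef, hqtdef]
      simp only [projIcc_of_mem hab ht]
      rw [hpq]
      rfl
    have hbnd : ∀ᵐ t ∂(volume.restrict (Icc a b)),
        ENNReal.ofReal ‖φ t‖ ≤ ENNReal.ofReal (deriv pt t) + ENNReal.ofReal (deriv qt t) := by
      have hdp : ∀ᵐ t ∂(volume.restrict (Icc a b)), DifferentiableAt ℝ pt t :=
        Filter.Eventually.filter_mono (ae_mono Measure.restrict_le_self)
          hptmono.ae_differentiableAt
      have hdq : ∀ᵐ t ∂(volume.restrict (Icc a b)), DifferentiableAt ℝ qt t :=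
        Filter.Eventually.filter_mono (ae_mono Measure.restrict_le_self)
          hqtmono.ae_differentiableAt
      filter_upwards [hkey, haeIoo, hdp, hdq] with t hd hIoo hp' hq'
      have hGt : HasDerivAt G (φ t) t := hd.hasDerivAt (Icc_mem_nhds hIoo.1 hIoo.2)
      have heq2 : (fun s => pt s - qt s) =ᶠ[𝓝 t] G := by
        filter_upwards [Icc_mem_nhds hIoo.1 hIoo.2] with s hs
        exact (hGeq s hs).symm
      have hGt2 : HasDerivAt (fun s => pt s - qt s) (φ t) t :=
        HasDerivAt.congr_of_eventuallyEq hGt heq2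
      have hGt3 : HasDerivAt (fun s => pt s - qt s) (deriv pt t - deriv qt t) t :=
        hp'.hasDerivAt.sub hq'.hasDerivAt
      have heq3 : φ t = deriv pt t - deriv qt t := hGt2.unique hGt3
      have hpn := Monotone.deriv_nonneg' hptmono t
      have hqn := Monotone.deriv_nonneg' hqtmono t
      rw [← ENNReal.ofReal_add hpn hqn]
      apply ENNReal.ofReal_le_ofReal
      rw [Real.norm_eq_abs, heq3, abs_le]
      constructor <;> [linarith; linarith]
    have hfin : HasFiniteIntegral φ (volume.restrict (Icc a b)) := by
      rw [hasFiniteIntegral_iff_norm]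
      have hres : volume.restrict (Icc a b) = volume.restrict (Ioo a b) :=
        (Measure.restrict_congr_set Ioo_ae_eq_Icc).symm
      calc ∫⁻ t, ENNReal.ofReal ‖φ t‖ ∂(volume.restrict (Icc a b))
          ≤ ∫⁻ t, (ENNReal.ofReal (deriv pt t) + ENNReal.ofReal (deriv qt t))
              ∂(volume.restrict (Icc a b)) := lintegral_mono_ae hbnd
        _ = (∫⁻ t in Icc a b, ENNReal.ofReal (deriv pt t)) +
            ∫⁻ t in Icc a b, ENNReal.ofReal (deriv qt t) := by
            rw [lintegral_add_left]
            exact ENNReal.measurable_ofReal.comp (measurable_deriv pt)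
        _ = (∫⁻ t in Ioo a b, ENNReal.ofReal (deriv pt t)) +
            ∫⁻ t in Ioo a b, ENNReal.ofReal (deriv qt t) := by rw [hres]
        _ ≤ ENNReal.ofReal (pt (b+1) - pt a) + ENNReal.ofReal (qt (b+1) - qt a) :=
            add_le_add (lintegral_deriv_le_of_monotone hptmono hab)
              (lintegral_deriv_le_of_monotone hqtmono hab)
        _ < ⊤ := by
            rw [ENNReal.add_lt_top]
            exact ⟨ENNReal.ofReal_lt_top, ENNReal.ofReal_lt_top⟩
    have hInt : IntegrableOn φ (Icc a b) volume := ⟨hφmeas, hfin⟩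
    -- FTC via the auxiliary primitive
    set H : ℝ → ℝ := fun y => ∫ t in a..y, φ t with hHdef
    have hHadd : ∀ x ∈ Icc a b, ∀ y ∈ Icc a b, H y - H x = ∫ t in x..y, φ t := by
      intro x hx y hy
      rw [hHdef]
      exact intervalIntegral.integral_interval_sub_left
        (hφI hInt a (left_mem_Icc.2 hab) y hy) (hφI hInt a (left_mem_Icc.2 hab) x hx)
    have hHAC : AbsolutelyContinuousOn H a b := by
      refine ac_of_integral_bound hInt fun x hx y hy hxy => ?_
      rw [hHadd x hx y hy, intervalIntegral.integral_of_le hxy]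
      exact MeasureTheory.norm_integral_le_integral_norm φ
    have hHderiv := hasDerivWithinAt_of_integral_eq hInt (G := H) hHadd
    have hψAC : AbsolutelyContinuousOn (G - H) a b := AbsolutelyContinuousOn.sub hGAC hHAC
    have hψcont : ContinuousOn (G - H) (Icc a b) :=
      (AbsolutelyContinuousOn.continuousOn hGAC).sub
        (AbsolutelyContinuousOn.continuousOn hHAC)
    have hψd : ∀ᵐ t ∂(volume.restrict (Icc a b)),
        HasDerivWithinAt (G - H) 0 (Icc a b) t := by
      filter_upwards [hkey, hHderiv] with t h1 h2
      have := h1.sub h2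
      simpa using this
    have hconst := ac_const_of_deriv_zero hψAC hψcont hψd
    have hFTC : ∀ α ∈ Icc a b, ∀ β ∈ Icc a b, G β - G α = ∫ t in α..β, φ t := by
      intro α hα β hβ
      have e1 := hconst α hα
      have e2 := hconst β hβ
      have e3 : G β - G α = H β - H α := by
        have h4 : (G - H) β = (G - H) α := by rw [e1, e2]
        simp only [Pi.sub_apply] at h4
        linarith
      rw [e3]
      exact hHadd α hα β hβ
    refine ⟨hInt, fun α hα β hβ => ?_⟩
    calc ∫ x in u α..u β, f x = F (u β) - F (u α) :=
          (hFadd (u α) (hmaps hα) (u β) (hmaps hβ)).symm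
      _ = G β - G α := rfl
      _ = ∫ t in α..β, φ t := hFTC α hα β hβ
  · -- reverse direction
    rintro ⟨hInt, hfor⟩
    refine ac_of_integral_bound hInt (G := G) fun x hx y hy hxy => ?_
    have h1 : G y - G x = ∫ t in x..y, φ t := by
      rw [hGdef, Function.comp_apply, Function.comp_apply,
        hFadd (u x) (hmaps hx) (u y) (hmaps hy)]
      exact hfor x hx y hy
    rw [h1, intervalIntegral.integral_of_le hxy]
    exact MeasureTheory.norm_integral_le_integral_norm φ
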